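/- Let (F_i)_{i=0}^{n} be a filtration on a probability space and let X_1, …, X_n be real random variables such that X_i is F_i-measurable and |X_i| ≤ 1 almost surely. Then for every δ ∈ (0, 1): P[ Σ_{i=1}^{n} X_i² ≥ 8·Σ_{i=1}^{n} E[X_i² | F_{i−1}] + 4·ln(4/δ) ] ≤ (⌈log₂(n)⌉ + 1)·δ. -/

import Mathlib

open MeasureTheory Finset

private lemma exp_logtwo_mul_le {y : ℝ} (h0 : 0 ≤ y) (h1 : y ≤ 1) :
    Real.exp (Real.log 2 * y) ≤ 1 + y := by
  have h := convexOn_exp.2 (Set.mem_univ (0 : ℝ)) (Set.mem_univ (Real.log 2))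
    (by linarith : (0:ℝ) ≤ 1 - y) h0 (by ring)
  simp only [smul_eq_mul, mul_zero, zero_add, Real.exp_zero,
    Real.exp_log (by norm_num : (0:ℝ) < 2)] at h
  rw [mul_comm y] at h
  linarith

section Aux

variable {Ω : Type*} {m0 : MeasurableSpace Ω} (μ : Measure Ω) [IsProbabilityMeasure μ]
  (F : Filtration ℕ m0) (X : ℕ → Ω → ℝ)

private lemma sm_exp_sum (n : ℕ)
    (hm : ∀ i ∈ Finset.Icc 1 n, StronglyMeasurable[F i] (X i)) :
    StronglyMeasurable[F n] (fun ω => Real.exp (∑ i ∈ Finset.Icc 1 n,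
      (Real.log 2 * (X i ω) ^ 2 - (μ[fun ω' => (X i ω') ^ 2 | F (i - 1)]) ω))) := by
  refine Real.continuous_exp.comp_stronglyMeasurable ?_
  refine Finset.stronglyMeasurable_fun_sum _ (fun i hi => ?_)
  have hi' := Finset.mem_Icc.mp hi
  have h1 : StronglyMeasurable[F n] (X i) := (hm i hi).mono (F.mono hi'.2)
  have h2 : StronglyMeasurable[F n] (μ[fun ω' => (X i ω') ^ 2 | F (i - 1)]) :=
    stronglyMeasurable_condExp.mono (F.mono (le_trans (Nat.sub_le i 1) hi'.2))
  exact (stronglyMeasurable_const.mul (h1.pow 2)).sub h2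

private lemma bound_ae (n : ℕ)
    (hb : ∀ i ∈ Finset.Icc 1 n, ∀ᵐ ω ∂μ, |X i ω| ≤ 1) :
    ∀ᵐ ω ∂μ, ∑ i ∈ Finset.Icc 1 n,
      (Real.log 2 * (X i ω) ^ 2 - (μ[fun ω' => (X i ω') ^ 2 | F (i - 1)]) ω)
      ≤ n * Real.log 2 := by
  have hb' : ∀ᵐ ω ∂μ, ∀ i ∈ Finset.Icc 1 n, |X i ω| ≤ 1 := (Finset.eventually_all _).2 hb
  have hc : ∀ᵐ ω ∂μ, ∀ i ∈ Finset.Icc 1 n,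
      0 ≤ (μ[fun ω' => (X i ω') ^ 2 | F (i - 1)]) ω :=
    (Finset.eventually_all _).2 (fun i _ => condExp_nonneg (ae_of_all _ fun ω => sq_nonneg _))
  filter_upwards [hb', hc] with ω h1 h2
  calc ∑ i ∈ Finset.Icc 1 n,
        (Real.log 2 * (X i ω) ^ 2 - (μ[fun ω' => (X i ω') ^ 2 | F (i - 1)]) ω)
      ≤ ∑ _i ∈ Finset.Icc 1 n, Real.log 2 := by
        refine Finset.sum_le_sum (fun i hi => ?_)
        have hx : (X i ω) ^ 2 ≤ 1 := by nlinarith [h1 i hi, abs_nonneg (X i ω), sq_abs (X i ω)]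
        have hl2 : 0 ≤ Real.log 2 := Real.log_nonneg one_le_two
        nlinarith [h2 i hi, sq_nonneg (X i ω)]
    _ = n * Real.log 2 := by
        rw [Finset.sum_const, Nat.card_Icc]
        simp [nsmul_eq_mul]

private lemma integrable_exp_sum (n : ℕ)
    (hm : ∀ i ∈ Finset.Icc 1 n, StronglyMeasurable[F i] (X i))
    (hb : ∀ i ∈ Finset.Icc 1 n, ∀ᵐ ω ∂μ, |X i ω| ≤ 1) :
    Integrable (fun ω => Real.exp (∑ i ∈ Finset.Icc 1 n,
      (Real.log 2 * (X i ω) ^ 2 - (μ[fun ω' => (X i ω') ^ 2 | F (i - 1)]) ω))) μ := by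
  refine Integrable.mono' (integrable_const (Real.exp (n * Real.log 2)))
    ((sm_exp_sum μ F X n hm).mono (F.le n)).aestronglyMeasurable ?_
  filter_upwards [bound_ae μ F X n hb] with ω h
  rw [Real.norm_eq_abs, abs_of_nonneg (Real.exp_pos _).le]
  exact Real.exp_le_exp.2 h

private lemma integral_exp_le_one :
    ∀ n : ℕ, (∀ i ∈ Finset.Icc 1 n, StronglyMeasurable[F i] (X i)) →
      (∀ i ∈ Finset.Icc 1 n, ∀ᵐ ω ∂μ, |X i ω| ≤ 1) →
      ∫ ω, Real.exp (∑ i ∈ Finset.Icc 1 n,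
        (Real.log 2 * (X i ω) ^ 2 - (μ[fun ω' => (X i ω') ^ 2 | F (i - 1)]) ω)) ∂μ ≤ 1 := by
  intro n
  induction n with
  | zero =>
      intro _ _
      rw [Finset.Icc_eq_empty (by omega)]
      simp
  | succ n ih =>
      intro hm hb
      have hsub : ∀ i, i ∈ Finset.Icc 1 n → i ∈ Finset.Icc 1 (n + 1) := by
        intro i hi; rw [Finset.mem_Icc] at *; omega
      have hm' := fun i hi => hm i (hsub i hi)
      have hb' := fun i hi => hb i (hsub i hi)
      have IH := ih hm' hb'
      set Y : Ω → ℝ := fun ω => (X (n + 1) ω) ^ 2 with hYdef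
      set E : Ω → ℝ := μ[Y | F n] with hEdef
      set G : Ω → ℝ := fun ω => Real.exp (∑ i ∈ Finset.Icc 1 n,
        (Real.log 2 * (X i ω) ^ 2 - (μ[fun ω' => (X i ω') ^ 2 | F (i - 1)]) ω)) with hGdef
      have hmem : (n + 1) ∈ Finset.Icc 1 (n + 1) := by rw [Finset.mem_Icc]; omega
      have hsplit : ∀ ω, Real.exp (∑ i ∈ Finset.Icc 1 (n + 1),
          (Real.log 2 * (X i ω) ^ 2 - (μ[fun ω' => (X i ω') ^ 2 | F (i - 1)]) ω))
          = (G ω * Real.exp (-(E ω))) * Real.exp (Real.log 2 * Y ω) := by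
        intro ω
        rw [Finset.sum_Icc_succ_top (by omega : 1 ≤ n + 1)]
        simp only [Nat.add_sub_cancel]
        rw [Real.exp_add, sub_eq_add_neg, Real.exp_add]
        simp only [hGdef, hEdef, hYdef]
        ring
      -- basic facts
      have hYm0 : StronglyMeasurable Y := (((hm (n + 1) hmem).mono (F.le _)).pow 2)
      have hY0 : ∀ ω, 0 ≤ Y ω := fun ω => sq_nonneg _
      have hYb : ∀ᵐ ω ∂μ, Y ω ≤ 1 := by
        filter_upwards [hb (n + 1) hmem] with ω h
        simp only [hYdef]
        nlinarith [sq_abs (X (n + 1) ω), abs_nonneg (X (n + 1) ω)]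
      have hYint : Integrable Y μ := by
        refine Integrable.mono' (integrable_const 1) hYm0.aestronglyMeasurable ?_
        filter_upwards [hYb] with ω h
        rw [Real.norm_eq_abs, abs_of_nonneg (hY0 ω)]; exact h
      have hEm : StronglyMeasurable[F n] E := stronglyMeasurable_condExp
      have hE0 : ∀ᵐ ω ∂μ, 0 ≤ E ω := condExp_nonneg (ae_of_all _ hY0)
      have hGm : StronglyMeasurable[F n] G := sm_exp_sum μ F X n hm'
      have hG0 : ∀ ω, 0 ≤ G ω := fun ω => (Real.exp_pos _).le
      have hGb : ∀ᵐ ω ∂μ, G ω ≤ Real.exp (n * Real.log 2) := by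
        filter_upwards [bound_ae μ F X n hb'] with ω h
        exact Real.exp_le_exp.2 h
      have hGint : Integrable G μ := integrable_exp_sum μ F X n hm' hb'
      -- the factor exp(log 2 * Y)
      set f2 : Ω → ℝ := fun ω => Real.exp (Real.log 2 * Y ω) with hf2def
      have hf2m : StronglyMeasurable f2 :=
        Real.continuous_exp.comp_stronglyMeasurable (stronglyMeasurable_const.mul hYm0)
      have hf2b : ∀ᵐ ω ∂μ, f2 ω ≤ 2 := by
        filter_upwards [hYb] with ω h
        have := exp_logtwo_mul_le (hY0 ω) h
        have h2 : (1 : ℝ) + Y ω ≤ 2 := by linarith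
        exact this.trans h2
      have hf2nonneg : ∀ ω, 0 ≤ f2 ω := fun ω => (Real.exp_pos _).le
      have hf2int : Integrable f2 μ := by
        refine Integrable.mono' (integrable_const 2) hf2m.aestronglyMeasurable ?_
        filter_upwards [hf2b] with ω h
        rw [Real.norm_eq_abs, abs_of_nonneg (hf2nonneg ω)]; exact h
      -- the F n-measurable factor
      set g : Ω → ℝ := fun ω => G ω * Real.exp (-(E ω)) with hgdef
      have hgm : StronglyMeasurable[F n] g :=
        hGm.mul (Real.continuous_exp.comp_stronglyMeasurable hEm.neg)
      have hg0 : ∀ ω, 0 ≤ g ω := fun ω => mul_nonneg (hG0 ω) (Real.exp_pos _).le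
      have hgb : ∀ᵐ ω ∂μ, g ω ≤ Real.exp (n * Real.log 2) := by
        filter_upwards [hGb, hE0] with ω h1 h2
        have : Real.exp (-(E ω)) ≤ 1 := by
          rw [Real.exp_le_one_iff]; linarith
        calc g ω ≤ G ω * 1 := mul_le_mul_of_nonneg_left this (hG0 ω)
          _ = G ω := mul_one _
          _ ≤ _ := h1
      have hprodint : Integrable (fun ω => g ω * f2 ω) μ := by
        refine Integrable.mono' (integrable_const (Real.exp (n * Real.log 2) * 2))
          ((hgm.mono (F.le n)).mul hf2m).aestronglyMeasurable ?_
        filter_upwards [hgb, hf2b] with ω h1 h2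
        rw [Real.norm_eq_abs, abs_of_nonneg (mul_nonneg (hg0 ω) (hf2nonneg ω))]
        exact mul_le_mul h1 h2 (hf2nonneg ω) (Real.exp_pos _).le
      -- pull-out property
      have hpull : μ[fun ω => g ω * f2 ω | F n] =ᵐ[μ] fun ω => g ω * (μ[f2 | F n]) ω := by
        have := condExp_mul_of_stronglyMeasurable_left (m := F n) (μ := μ) hgm hprodint hf2int
        filter_upwards [this] with ω hω
        exact hω
      -- conditional bound
      have hcond0 : 0 ≤ᵐ[μ] μ[f2 | F n] := condExp_nonneg (ae_of_all _ hf2nonneg)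
      have hcond_le : μ[f2 | F n] ≤ᵐ[μ] fun ω => 1 + E ω := by
        have h12 : f2 ≤ᵐ[μ] fun ω => 1 + Y ω := by
          filter_upwards [hYb] with ω h
          exact exp_logtwo_mul_le (hY0 ω) h
        have hsum_int : Integrable (fun ω => 1 + Y ω) μ := (integrable_const 1).add hYint
        have h1 := condExp_mono (m := F n) hf2int hsum_int h12
        have h2 : μ[fun ω => (1 : ℝ) + Y ω | F n] =ᵐ[μ] fun ω => 1 + E ω := by
          have ha := condExp_add (m := F n) (μ := μ) (integrable_const (1 : ℝ)) hYint
          have hc : μ[fun _ => (1 : ℝ) | F n] = fun _ => (1 : ℝ) := condExp_const (F.le n) 1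
          filter_upwards [ha] with ω hω
          have : (μ[fun _ => (1 : ℝ) | F n]) ω + (μ[Y | F n]) ω = 1 + E ω := by
            rw [hc, hEdef]
          calc (μ[fun ω => (1 : ℝ) + Y ω | F n]) ω
              = (μ[fun _ => (1 : ℝ) | F n]) ω + (μ[Y | F n]) ω := hω
            _ = 1 + E ω := this
        exact h1.trans (Filter.EventuallyEq.le h2)
      have hfinal : (fun ω => g ω * (μ[f2 | F n]) ω) ≤ᵐ[μ] G := by
        filter_upwards [hcond_le] with ω h
        have h2 : (1 : ℝ) + E ω ≤ Real.exp (E ω) := by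
          have := Real.add_one_le_exp (E ω); linarith
        calc g ω * (μ[f2 | F n]) ω ≤ g ω * (1 + E ω) :=
              mul_le_mul_of_nonneg_left h (hg0 ω)
          _ ≤ g ω * Real.exp (E ω) := mul_le_mul_of_nonneg_left h2 (hg0 ω)
          _ = G ω := by
              rw [hgdef]
              simp only [mul_assoc, ← Real.exp_add]
              simp
      have hint1 : Integrable (fun ω => g ω * (μ[f2 | F n]) ω) μ := by
        refine Integrable.mono' (integrable_const (Real.exp (n * Real.log 2)))
          (((hgm.mul stronglyMeasurable_condExp).mono (F.le n)).aestronglyMeasurable) ?_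
        filter_upwards [hfinal, hcond0, hGb] with ω h1 h2 h3
        rw [Real.norm_eq_abs, abs_of_nonneg (mul_nonneg (hg0 ω) h2)]
        exact h1.trans h3
      calc ∫ ω, Real.exp (∑ i ∈ Finset.Icc 1 (n + 1),
            (Real.log 2 * (X i ω) ^ 2 - (μ[fun ω' => (X i ω') ^ 2 | F (i - 1)]) ω)) ∂μ
          = ∫ ω, g ω * f2 ω ∂μ := by
            refine integral_congr_ae (ae_of_all _ fun ω => ?_)
            simp only [hgdef, hf2def]
            exact hsplit ω
        _ = ∫ ω, (μ[fun ω => g ω * f2 ω | F n]) ω ∂μ := (integral_condExp (F.le n)).symm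
        _ = ∫ ω, g ω * (μ[f2 | F n]) ω ∂μ := integral_congr_ae hpull
        _ ≤ ∫ ω, G ω ∂μ := integral_mono_ae hint1 hGint hfinal
        _ ≤ 1 := IH

end Aux

/-- Concentration of the sum of squares of a bounded adapted sequence around the sum of
its conditional second moments (Lemma 17 of Zhang et al. (2021)): for an adapted
sequence `X` with `|X i| ≤ 1` a.s. and every `δ ∈ (0,1)`,
`P[∑_{i=1}^n X i² ≥ 8·∑_{i=1}^n E[X i² | F (i−1)] + 4·ln(4/δ)] ≤ (⌈log₂ n⌉ + 1)·δ`. -/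
theorem sum_sq_concentration
    {Ω : Type*} {m0 : MeasurableSpace Ω} (μ : Measure Ω) [IsProbabilityMeasure μ]
    (F : Filtration ℕ m0) (n : ℕ)
    (X : ℕ → Ω → ℝ)
    (hmeas : ∀ i ∈ Finset.Icc 1 n, StronglyMeasurable[F i] (X i))
    (hbdd : ∀ i ∈ Finset.Icc 1 n, ∀ᵐ ω ∂μ, |X i ω| ≤ 1)
    (δ : ℝ) (hδ : δ ∈ Set.Ioo (0 : ℝ) 1) :
    μ {ω | 8 * ∑ i ∈ Finset.Icc 1 n, (μ[fun ω' => (X i ω') ^ 2 | F (i - 1)]) ω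
          + 4 * Real.log (4 / δ)
        ≤ ∑ i ∈ Finset.Icc 1 n, (X i ω) ^ 2}
      ≤ ENNReal.ofReal ((⌈Real.logb 2 n⌉ + 1) * δ) := by
  obtain ⟨hδ0, hδ1⟩ := hδ
  set M : Ω → ℝ := fun ω => Real.exp (∑ i ∈ Finset.Icc 1 n,
    (Real.log 2 * (X i ω) ^ 2 - (μ[fun ω' => (X i ω') ^ 2 | F (i - 1)]) ω)) with hMdef
  have hMint : Integrable M μ := integrable_exp_sum μ F X n hmeas hbdd
  have hIle : ∫ ω, M ω ∂μ ≤ 1 := integral_exp_le_one μ F X n hmeas hbdd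
  have hmarkov := mul_meas_ge_le_integral_of_nonneg
    (ae_of_all μ fun ω => (Real.exp_pos _).le) hMint (1 / δ)
  -- inclusion of events (a.e.)
  have hsubset : μ {ω | 8 * ∑ i ∈ Finset.Icc 1 n, (μ[fun ω' => (X i ω') ^ 2 | F (i - 1)]) ω
        + 4 * Real.log (4 / δ) ≤ ∑ i ∈ Finset.Icc 1 n, (X i ω) ^ 2}
      ≤ μ {ω | 1 / δ ≤ M ω} := by
    refine measure_mono_ae ?_
    have hT0 : ∀ᵐ ω ∂μ, ∀ i ∈ Finset.Icc 1 n,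
        0 ≤ (μ[fun ω' => (X i ω') ^ 2 | F (i - 1)]) ω :=
      (Finset.eventually_all _).2 (fun i _ => condExp_nonneg (ae_of_all _ fun ω => sq_nonneg _))
    filter_upwards [hT0] with ω hT
    intro hmem
    set S : ℝ := ∑ i ∈ Finset.Icc 1 n, (X i ω) ^ 2 with hSdef
    set T : ℝ := ∑ i ∈ Finset.Icc 1 n, (μ[fun ω' => (X i ω') ^ 2 | F (i - 1)]) ω with hTdef
    have hTnn : 0 ≤ T := Finset.sum_nonneg hT
    have hmem' : 8 * T + 4 * Real.log (4 / δ) ≤ S := hmem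
    show 1 / δ ≤ M ω
    have hMrw : M ω = Real.exp (Real.log 2 * S - T) := by
      simp only [hMdef]
      congr 1
      rw [Finset.sum_sub_distrib, ← Finset.mul_sum]
    have hl2 : (0.6931471803 : ℝ) < Real.log 2 := Real.log_two_gt_d9
    have hL0 : 0 ≤ Real.log (1 / δ) := Real.log_nonneg (one_le_one_div hδ0 hδ1.le)
    have hLle : Real.log (1 / δ) ≤ Real.log (4 / δ) := by
      apply Real.log_le_log (by positivity)
      gcongr
      norm_num
    have hexp : Real.log (1 / δ) ≤ Real.log 2 * S - T := by
      nlinarith [mul_le_mul_of_nonneg_left hmem' (by linarith : (0:ℝ) ≤ Real.log 2),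
        mul_nonneg (by linarith : (0:ℝ) ≤ Real.log 2) hTnn,
        mul_le_mul_of_nonneg_left hLle (by linarith : (0:ℝ) ≤ 4 * Real.log 2)]
    calc 1 / δ = Real.exp (Real.log (1 / δ)) := (Real.exp_log (by positivity)).symm
      _ ≤ Real.exp (Real.log 2 * S - T) := Real.exp_le_exp.2 hexp
      _ = M ω := hMrw.symm
  -- Markov bound
  have htoReal : (μ {ω | 1 / δ ≤ M ω}).toReal ≤ δ := by
    have h1 : 1 / δ * (μ {ω | 1 / δ ≤ M ω}).toReal ≤ 1 := hmarkov.trans hIle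
    have h2 : 0 ≤ (μ {ω | 1 / δ ≤ M ω}).toReal := ENNReal.toReal_nonneg
    calc (μ {ω | 1 / δ ≤ M ω}).toReal
        = δ * (1 / δ * (μ {ω | 1 / δ ≤ M ω}).toReal) := by field_simp
      _ ≤ δ * 1 := mul_le_mul_of_nonneg_left h1 hδ0.le
      _ = δ := mul_one _
  have hB : μ {ω | 1 / δ ≤ M ω} ≤ ENNReal.ofReal δ := by
    rw [← ENNReal.ofReal_toReal (measure_ne_top μ _)]
    exact ENNReal.ofReal_le_ofReal htoReal
  refine (hsubset.trans hB).trans (ENNReal.ofReal_le_ofReal ?_)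
  have hc : (0 : ℝ) ≤ (⌈Real.logb 2 (n : ℝ)⌉ : ℝ) := by
    have hlb : (0 : ℝ) ≤ Real.logb 2 (n : ℝ) := by
      rcases Nat.eq_zero_or_pos n with h | h
      · simp [h, Real.logb]
      · exact Real.logb_nonneg (by norm_num) (by exact_mod_cast h)
    exact hlb.trans (Int.le_ceil _)
  nlinarith [hδ0.le]
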